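/- Let A be an n×n real SPD matrix, 𝓑 an m×m real SPD matrix, Π an n×m real matrix, ℐ an m×n real matrix with Π ℐ = Iₙ, and suppose (ℐv)ᵀ 𝓑 (ℐv) ≤ β · vᵀ A v for all v ∈ ℝⁿ, for some β > 0. Let M be an n×n real matrix with M + Mᵀ − A SPD, let M̄ = M (M + Mᵀ − A)⁻¹ Mᵀ, and define the additive auxiliary space preconditioner by B_add⁻¹ = M̄⁻¹ + Π 𝓑⁻¹ Πᵀ. Then vᵀ A⁻¹ v ≤ β · vᵀ B_add⁻¹ v for all v ∈ ℝⁿ. -/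

import Mathlib

open Matrix

private lemma cs_aux {m : ℕ} {B : Matrix (Fin m) (Fin m) ℝ} (hB : B.PosSemidef)
    (c b : Fin m → ℝ) :
    (c ⬝ᵥ B.mulVec b) ^ 2 ≤ (c ⬝ᵥ B.mulVec c) * (b ⬝ᵥ B.mulVec b) := by
  have hsym : b ⬝ᵥ B.mulVec c = c ⬝ᵥ B.mulVec b := by
    have hBt : Bᵀ = B := by
      simpa [conjTranspose_eq_transpose_of_trivial] using hB.1.eq
    calc b ⬝ᵥ B.mulVec c = (b ᵥ* B) ⬝ᵥ c := by rw [dotProduct_mulVec]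
      _ = (Bᵀ *ᵥ b) ⬝ᵥ c := by rw [mulVec_transpose]
      _ = (B *ᵥ b) ⬝ᵥ c := by rw [hBt]
      _ = c ⬝ᵥ B.mulVec b := dotProduct_comm _ _
  have key : ∀ t : ℝ, 0 ≤ (b ⬝ᵥ B.mulVec b) * (t * t)
      + (-(2 * (c ⬝ᵥ B.mulVec b))) * t + c ⬝ᵥ B.mulVec c := by
    intro t
    have h := hB.dotProduct_mulVec_nonneg (c - t • b)
    simp only [star_trivial, mulVec_sub, mulVec_smul, dotProduct_sub, sub_dotProduct,
      dotProduct_smul, smul_dotProduct, smul_eq_mul] at h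
    rw [hsym] at h
    nlinarith [h]
  have hd := discrim_le_zero key
  rw [discrim] at hd
  nlinarith [hd]

/-- Lower spectral bound for the additive auxiliary space preconditioner. -/
theorem stmt_7 {n m : ℕ}
    (A : Matrix (Fin n) (Fin n) ℝ) (hA : A.PosDef)
    (B : Matrix (Fin m) (Fin m) ℝ) (hB : B.PosDef)
    (P : Matrix (Fin n) (Fin m) ℝ) (J : Matrix (Fin m) (Fin n) ℝ)
    (hPJ : P * J = 1)
    (β : ℝ) (hβ : 0 < β)
    (hstab : ∀ v : Fin n → ℝ,
      (J.mulVec v) ⬝ᵥ B.mulVec (J.mulVec v) ≤ β * (v ⬝ᵥ A.mulVec v))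
    (M : Matrix (Fin n) (Fin n) ℝ) (hM : (M + Mᵀ - A).PosDef) :
    ∀ v : Fin n → ℝ,
      v ⬝ᵥ A⁻¹.mulVec v ≤
        β * (v ⬝ᵥ ((M * (M + Mᵀ - A)⁻¹ * Mᵀ)⁻¹ + P * B⁻¹ * Pᵀ).mulVec v) := by
  intro v
  set N := M + Mᵀ - A with hNdef
  -- M + Mᵀ is PosDef
  have hMMt : (M + Mᵀ).PosDef := by
    have h := hM.add hA
    have : N + A = M + Mᵀ := by rw [hNdef]; abel
    rwa [this] at h
  -- det M ≠ 0
  have hMdet : M.det ≠ 0 := by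
    intro h0
    obtain ⟨x, hx, hMx⟩ := (Matrix.exists_mulVec_eq_zero_iff).2 h0
    have hpos := hMMt.dotProduct_mulVec_pos (x := x) (by simpa using hx)
    have h1 : x ⬝ᵥ (M *ᵥ x) = 0 := by rw [hMx, dotProduct_zero]
    have h2 : x ⬝ᵥ (Mᵀ *ᵥ x) = 0 := by
      rw [dotProduct_mulVec, vecMul_transpose, hMx, zero_dotProduct]
    simp only [star_trivial, add_mulVec, dotProduct_add, h1, h2, add_zero] at hpos
    exact lt_irrefl _ hpos
  have hMtdet : Mᵀ.det ≠ 0 := by rwa [det_transpose]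
  -- M̄ = M * N⁻¹ * Mᵀ is PosDef
  have hNinv : N⁻¹.PosDef := hM.inv
  have hNinvT : N⁻¹ᵀ = N⁻¹ := by
    simpa [conjTranspose_eq_transpose_of_trivial] using hNinv.1.eq
  have hMbar : (M * N⁻¹ * Mᵀ).PosDef := by
    refine PosDef.of_dotProduct_mulVec_pos ?_ ?_
    · show (M * N⁻¹ * Mᵀ)ᴴ = _
      rw [conjTranspose_eq_transpose_of_trivial, transpose_mul, transpose_mul,
        transpose_transpose, hNinvT, Matrix.mul_assoc]
    · intro x hx
      have hMtx : Mᵀ *ᵥ x ≠ 0 := by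
        intro h
        exact hMtdet ((Matrix.exists_mulVec_eq_zero_iff).1 ⟨x, by simpa using hx, h⟩)
      have := hNinv.dotProduct_mulVec_pos (x := Mᵀ *ᵥ x) (by simpa using hMtx)
      simp only [star_trivial] at this ⊢
      have e : x ⬝ᵥ ((M * N⁻¹ * Mᵀ) *ᵥ x) = (Mᵀ *ᵥ x) ⬝ᵥ (N⁻¹ *ᵥ (Mᵀ *ᵥ x)) := by
        rw [← mulVec_mulVec, ← mulVec_mulVec, dotProduct_mulVec, ← mulVec_transpose]
      rw [e]; exact this
  have hMbarInv : (M * N⁻¹ * Mᵀ)⁻¹.PosDef := hMbar.inv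
  -- first term nonneg
  have hq1 : 0 ≤ v ⬝ᵥ ((M * N⁻¹ * Mᵀ)⁻¹ *ᵥ v) := by
    simpa using hMbarInv.posSemidef.dotProduct_mulVec_nonneg v
  -- setup
  set w := A⁻¹ *ᵥ v with hwdef
  have hAw : A *ᵥ w = v := by
    rw [hwdef, mulVec_mulVec, Matrix.mul_nonsing_inv _ (isUnit_iff_ne_zero.2 hA.det_pos.ne'),
      one_mulVec]
  set b := J *ᵥ w with hbdef
  set a := Pᵀ *ᵥ v with hadef
  -- v ⬝ᵥ w = a ⬝ᵥ b
  have hvw : v ⬝ᵥ w = a ⬝ᵥ b := by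
    have hw : P *ᵥ b = w := by rw [hbdef, mulVec_mulVec, hPJ, one_mulVec]
    rw [← hw, dotProduct_mulVec, ← mulVec_transpose]
  -- x = w ⬝ᵥ A w
  have hxA : v ⬝ᵥ w = w ⬝ᵥ (A *ᵥ w) := by
    rw [← hAw]; exact dotProduct_comm _ _
  have hx0 : 0 ≤ v ⬝ᵥ w := by
    rw [hxA]; simpa using hA.posSemidef.dotProduct_mulVec_nonneg w
  -- c := B⁻¹ a
  set c := B⁻¹ *ᵥ a with hcdef
  have hBinv : B⁻¹.PosDef := hB.inv
  have hBc : B *ᵥ c = a := by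
    rw [hcdef, mulVec_mulVec, Matrix.mul_nonsing_inv _ (isUnit_iff_ne_zero.2 hB.det_pos.ne'),
      one_mulVec]
  have hBt : Bᵀ = B := by simpa [conjTranspose_eq_transpose_of_trivial] using hB.1.eq
  have hab : a ⬝ᵥ b = c ⬝ᵥ (B *ᵥ b) := by
    calc a ⬝ᵥ b = (B *ᵥ c) ⬝ᵥ b := by rw [hBc]
      _ = (Bᵀ *ᵥ c) ⬝ᵥ b := by rw [hBt]
      _ = (c ᵥ* B) ⬝ᵥ b := by rw [mulVec_transpose]
      _ = c ⬝ᵥ (B *ᵥ b) := (dotProduct_mulVec _ _ _).symm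
  have hcc : c ⬝ᵥ (B *ᵥ c) = a ⬝ᵥ (B⁻¹ *ᵥ a) := by
    rw [hBc, hcdef]; exact dotProduct_comm _ _
  have hq2 : v ⬝ᵥ ((P * B⁻¹ * Pᵀ) *ᵥ v) = a ⬝ᵥ (B⁻¹ *ᵥ a) := by
    have h1 : (P * B⁻¹ * Pᵀ) *ᵥ v = P *ᵥ (B⁻¹ *ᵥ a) := by
      rw [hadef, mulVec_mulVec, mulVec_mulVec]
    rw [h1, dotProduct_mulVec, ← mulVec_transpose, ← hadef]
  have hT0 : 0 ≤ a ⬝ᵥ (B⁻¹ *ᵥ a) := by simpa using hBinv.posSemidef.dotProduct_mulVec_nonneg a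
  have hstabw : b ⬝ᵥ (B *ᵥ b) ≤ β * (v ⬝ᵥ w) := by
    rw [hxA]; exact hstab w
  have hb0 : 0 ≤ b ⬝ᵥ (B *ᵥ b) := by simpa using hB.posSemidef.dotProduct_mulVec_nonneg b
  have hcs := cs_aux hB.posSemidef c b
  rw [hcc] at hcs
  have hkey : (v ⬝ᵥ w) ^ 2 ≤ (a ⬝ᵥ (B⁻¹ *ᵥ a)) * (β * (v ⬝ᵥ w)) := by
    calc (v ⬝ᵥ w) ^ 2 = (c ⬝ᵥ (B *ᵥ b)) ^ 2 := by rw [hvw, hab]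
      _ ≤ (a ⬝ᵥ (B⁻¹ *ᵥ a)) * (b ⬝ᵥ (B *ᵥ b)) := hcs
      _ ≤ (a ⬝ᵥ (B⁻¹ *ᵥ a)) * (β * (v ⬝ᵥ w)) := by
          exact mul_le_mul_of_nonneg_left hstabw hT0
  rw [add_mulVec, dotProduct_add, hq2]
  rcases hx0.eq_or_lt with h0 | hpos
  · rw [← h0]
    positivity
  · nlinarith [hkey, hq1, hT0, hβ, hpos]
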